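/- Let n ≥ 1, ε > 0, let U ⊆ ℝⁿ be open, let H : ℝⁿ → ℝ be continuously differentiable and satisfy (H3): there exist γ, δ > 0 such that ∇H(p)·p − γ H(p) ≥ δ for all p ∈ ℝⁿ. Let u : U → ℝ be three times continuously differentiable and satisfy H(∇u(x)) = ε Δu(x) for every x ∈ U. Let α, β be real numbers with α + β > 0 and 2α + β = γ(α + β), and define z(x) := α (x · ∇u(x)) + β u(x). Then at every x ∈ U one has ∇H(∇u(x)) · ∇z(x) − ε Δz(x) ≥ (α + β) δ > 0. -/

import Mathlib

open scoped RealInnerProductSpace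

/-- The second partial derivative ∂²u/∂xᵢ∂xₖ of `u` at `x`. -/
noncomputable def pd2 {n : ℕ} (u : EuclideanSpace ℝ (Fin n) → ℝ)
    (x : EuclideanSpace ℝ (Fin n)) (i k : Fin n) : ℝ :=
  fderiv ℝ (fun y => fderiv ℝ u y (EuclideanSpace.single k 1)) x (EuclideanSpace.single i 1)

/-- The Laplacian of `u` at `x`: the sum of the second partial derivatives ∂²u/∂xᵢ². -/
noncomputable def lap {n : ℕ} (u : EuclideanSpace ℝ (Fin n) → ℝ)
    (x : EuclideanSpace ℝ (Fin n)) : ℝ :=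
  ∑ i, pd2 u x i i

/-! ### Auxiliary machinery -/

noncomputable def ee (n : ℕ) (i : Fin n) : EuclideanSpace ℝ (Fin n) := EuclideanSpace.single i 1

lemma clmA {n : ℕ} {F G : Type*} [NormedAddCommGroup F] [NormedSpace ℝ F]
    [NormedAddCommGroup G] [NormedSpace ℝ G]
    {c : EuclideanSpace ℝ (Fin n) → (F →L[ℝ] G)} {x : EuclideanSpace ℝ (Fin n)}
    (hc : DifferentiableAt ℝ c x) (w : F) (v : EuclideanSpace ℝ (Fin n)) :
    fderiv ℝ (fun y => c y w) x v = fderiv ℝ c x v w := by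
  have := fderiv_clm_apply hc (differentiableAt_const w)
  rw [show (fun y => c y w) = fun y => (c y) ((fun _ => w) y) from rfl, this]
  simp

lemma pd2_eq {n : ℕ} (u : EuclideanSpace ℝ (Fin n) → ℝ) (x : EuclideanSpace ℝ (Fin n))
    (h : DifferentiableAt ℝ (fderiv ℝ u) x) (i k : Fin n) :
    pd2 u x i k = fderiv ℝ (fderiv ℝ u) x (ee n i) (ee n k) := by
  rw [pd2]; exact clmA h _ _

lemma pd3_eq {n : ℕ} (u : EuclideanSpace ℝ (Fin n) → ℝ) (x : EuclideanSpace ℝ (Fin n))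
    (h : DifferentiableAt ℝ (fderiv ℝ (fderiv ℝ u)) x) (a b c : Fin n) :
    fderiv ℝ (fun y => fderiv ℝ (fderiv ℝ u) y (ee n a) (ee n b)) x (ee n c)
      = fderiv ℝ (fderiv ℝ (fderiv ℝ u)) x (ee n c) (ee n a) (ee n b) := by
  have h1 : DifferentiableAt ℝ (fun y => fderiv ℝ (fderiv ℝ u) y (ee n a)) x :=
    h.clm_apply (differentiableAt_const _)
  rw [show (fun y => fderiv ℝ (fderiv ℝ u) y (ee n a) (ee n b))
      = fun y => (fun y' => fderiv ℝ (fderiv ℝ u) y' (ee n a)) y (ee n b) from rfl,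
    clmA h1 _ _, clmA h _ _]

lemma inner_eq_sum {n : ℕ} (a b : EuclideanSpace ℝ (Fin n)) : ⟪a, b⟫ = ∑ i, a i * b i := by
  simp [PiLp.inner_apply]
  exact Finset.sum_congr rfl fun _ _ => mul_comm _ _

lemma grad_apply {n : ℕ} (f : EuclideanSpace ℝ (Fin n) → ℝ) (x : EuclideanSpace ℝ (Fin n)) (i : Fin n) :
    gradient f x i = fderiv ℝ f x (ee n i) := by
  have h := InnerProductSpace.toDual_symm_apply (𝕜 := ℝ) (y := fderiv ℝ f x) (x := ee n i)
  rw [inner_eq_sum] at h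
  simp only [ee, EuclideanSpace.single_apply, mul_ite, mul_one, mul_zero,
    Finset.sum_ite_eq', Finset.mem_univ, if_true] at h
  rw [gradient]
  simpa [ee] using h

noncomputable def Tmap (n : ℕ) :
    (EuclideanSpace ℝ (Fin n) →L[ℝ] ℝ) →L[ℝ] EuclideanSpace ℝ (Fin n) :=
  LinearMap.toContinuousLinearMap
    { toFun := fun M => WithLp.toLp 2 (fun k => M (ee n k))
      map_add' := by intro M N; ext k; simp
      map_smul' := by intro c M; ext k; simp }

lemma Tmap_apply {n : ℕ} (M : EuclideanSpace ℝ (Fin n) →L[ℝ] ℝ) (k : Fin n) :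
    Tmap n M k = M (ee n k) := rfl

/-- Formula for the directional derivative of `z`. -/
lemma fderiv_z {n : ℕ} (u z : EuclideanSpace ℝ (Fin n) → ℝ) (α β : ℝ)
    (hz : ∀ x, z x = α * ⟪x, gradient u x⟫ + β * u x)
    {y : EuclideanSpace ℝ (Fin n)} (hy : ContDiffAt ℝ 3 u y) (k : Fin n) :
    fderiv ℝ z y (ee n k) = (α + β) * fderiv ℝ u y (ee n k)
      + α * ∑ j, y j * fderiv ℝ (fderiv ℝ u) y (ee n k) (ee n j) := by
  have d1 : DifferentiableAt ℝ u y := hy.differentiableAt (by norm_num)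
  have d2 : DifferentiableAt ℝ (fderiv ℝ u) y :=
    (hy.fderiv_right (m := 2) (by norm_num)).differentiableAt (by norm_num)
  have hzfun : z = fun w => α * ∑ j, w j * fderiv ℝ u w (ee n j) + β * u w := by
    funext w
    rw [hz w, inner_eq_sum]
    simp_rw [grad_apply]
  have hproj : ∀ j : Fin n, DifferentiableAt ℝ (fun w : EuclideanSpace ℝ (Fin n) => w j) y :=
    fun j => (EuclideanSpace.proj (𝕜 := ℝ) j).differentiableAt
  have happ : ∀ j : Fin n, DifferentiableAt ℝ (fun w => fderiv ℝ u w (ee n j)) y :=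
    fun j => d2.clm_apply (differentiableAt_const _)
  have hg : DifferentiableAt ℝ (fun w => ∑ j, w j * fderiv ℝ u w (ee n j)) y :=
    DifferentiableAt.fun_sum fun j _ => (hproj j).mul (happ j)
  rw [hzfun, fderiv_fun_add (hg.const_mul α) (d1.const_mul β), fderiv_const_mul hg α,
    fderiv_const_mul d1 β]
  rw [ContinuousLinearMap.add_apply, ContinuousLinearMap.smul_apply,
    ContinuousLinearMap.smul_apply]
  rw [fderiv_fun_sum (fun j _ => (hproj j).fun_mul (happ j))]
  rw [ContinuousLinearMap.sum_apply]
  have hterm : ∀ j : Fin n,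
      fderiv ℝ (fun w => w j * fderiv ℝ u w (ee n j)) y (ee n k)
        = (ee n k) j * fderiv ℝ u y (ee n j)
          + y j * fderiv ℝ (fderiv ℝ u) y (ee n k) (ee n j) := by
    intro j
    rw [fderiv_fun_mul (hproj j) (happ j)]
    rw [ContinuousLinearMap.add_apply, ContinuousLinearMap.smul_apply,
      ContinuousLinearMap.smul_apply]
    have h1 : fderiv ℝ (fun w : EuclideanSpace ℝ (Fin n) => w j) y (ee n k) = (ee n k) j := by
      have : (fun w : EuclideanSpace ℝ (Fin n) => w j) = EuclideanSpace.proj (𝕜 := ℝ) j := rfl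
      rw [this, ContinuousLinearMap.fderiv]
      rfl
    have h2 : fderiv ℝ (fun w => fderiv ℝ u w (ee n j)) y (ee n k)
        = fderiv ℝ (fderiv ℝ u) y (ee n k) (ee n j) := by
      have := fderiv_clm_apply d2 (differentiableAt_const (ee n j))
      rw [show (fun w => fderiv ℝ u w (ee n j)) = fun w => (fderiv ℝ u w) ((fun _ => ee n j) w) from rfl, this]
      simp
    rw [h1, h2]
    simp [smul_eq_mul]
    ring
  rw [Finset.sum_congr rfl (fun j _ => hterm j)]
  rw [Finset.sum_add_distrib]
  have : ∑ j, (ee n k) j * fderiv ℝ u y (ee n j) = fderiv ℝ u y (ee n k) := by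
    simp [ee, EuclideanSpace.single_apply]
  rw [this]
  ring_nf

/-- Formula for the second pure partial of `z`. -/
lemma pd2_z {n : ℕ} (u z : EuclideanSpace ℝ (Fin n) → ℝ) (α β : ℝ)
    {x : EuclideanSpace ℝ (Fin n)}
    (hx : ContDiffAt ℝ 3 u x) (k : Fin n)
    (hev : (fun y => fderiv ℝ z y (ee n k)) =ᶠ[nhds x]
      (fun y => (α + β) * fderiv ℝ u y (ee n k)
        + α * ∑ j, y j * fderiv ℝ (fderiv ℝ u) y (ee n k) (ee n j))) :
    pd2 z x k k = (2 * α + β) * fderiv ℝ (fderiv ℝ u) x (ee n k) (ee n k)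
      + α * ∑ j, x j * fderiv ℝ (fderiv ℝ (fderiv ℝ u)) x (ee n k) (ee n k) (ee n j) := by
  have d2 : DifferentiableAt ℝ (fderiv ℝ u) x :=
    (hx.fderiv_right (m := 2) (by norm_num)).differentiableAt (by norm_num)
  have d3 : DifferentiableAt ℝ (fderiv ℝ (fderiv ℝ u)) x :=
    ((hx.fderiv_right (m := 2) (by norm_num)).fderiv_right (m := 1) (by norm_num)).differentiableAt (by norm_num)
  have hpd : pd2 z x k k = fderiv ℝ (fun y => fderiv ℝ z y (ee n k)) x (ee n k) := rfl
  rw [hpd, hev.fderiv_eq]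
  have hproj : ∀ j : Fin n, DifferentiableAt ℝ (fun w : EuclideanSpace ℝ (Fin n) => w j) x :=
    fun j => (EuclideanSpace.proj (𝕜 := ℝ) j).differentiableAt
  have happ1 : DifferentiableAt ℝ (fun w => fderiv ℝ u w (ee n k)) x :=
    d2.clm_apply (differentiableAt_const _)
  have happ2 : ∀ j : Fin n, DifferentiableAt ℝ (fun w => fderiv ℝ (fderiv ℝ u) w (ee n k) (ee n j)) x :=
    fun j => (d3.clm_apply (differentiableAt_const _)).clm_apply (differentiableAt_const _)
  have hg : DifferentiableAt ℝ (fun w => ∑ j, w j * fderiv ℝ (fderiv ℝ u) w (ee n k) (ee n j)) x :=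
    DifferentiableAt.fun_sum fun j _ => (hproj j).mul (happ2 j)
  rw [fderiv_fun_add (happ1.const_mul _) (hg.const_mul α), fderiv_const_mul happ1,
    fderiv_const_mul hg]
  rw [ContinuousLinearMap.add_apply, ContinuousLinearMap.smul_apply,
    ContinuousLinearMap.smul_apply]
  rw [fderiv_fun_sum (fun j _ => (hproj j).fun_mul (happ2 j)), ContinuousLinearMap.sum_apply]
  have hterm : ∀ j : Fin n,
      fderiv ℝ (fun w => w j * fderiv ℝ (fderiv ℝ u) w (ee n k) (ee n j)) x (ee n k)
        = (ee n k) j * fderiv ℝ (fderiv ℝ u) x (ee n k) (ee n j)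
          + x j * fderiv ℝ (fderiv ℝ (fderiv ℝ u)) x (ee n k) (ee n k) (ee n j) := by
    intro j
    rw [fderiv_fun_mul (hproj j) (happ2 j)]
    rw [ContinuousLinearMap.add_apply, ContinuousLinearMap.smul_apply,
      ContinuousLinearMap.smul_apply]
    have h1 : fderiv ℝ (fun w : EuclideanSpace ℝ (Fin n) => w j) x (ee n k) = (ee n k) j := by
      have : (fun w : EuclideanSpace ℝ (Fin n) => w j) = EuclideanSpace.proj (𝕜 := ℝ) j := rfl
      rw [this, ContinuousLinearMap.fderiv]; rfl
    rw [h1, pd3_eq u x d3 k j k]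
    simp [smul_eq_mul]
    ring
  rw [Finset.sum_congr rfl (fun j _ => hterm j), Finset.sum_add_distrib]
  have hsingle : ∑ j, (ee n k) j * fderiv ℝ (fderiv ℝ u) x (ee n k) (ee n j)
      = fderiv ℝ (fderiv ℝ u) x (ee n k) (ee n k) := by
    simp [ee, EuclideanSpace.single_apply]
  rw [hsingle]
  have h2 : fderiv ℝ (fun w => fderiv ℝ u w (ee n k)) x (ee n k)
      = fderiv ℝ (fderiv ℝ u) x (ee n k) (ee n k) := clmA d2 _ _
  rw [h2]
  simp [smul_eq_mul]
  ring

/-- Differentiating the PDE `H (∇u) = ε Δu`. -/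
lemma pde_diff {n : ℕ} (u H : EuclideanSpace ℝ (Fin n) → ℝ) (ε : ℝ)
    (hH : ContDiff ℝ 1 H)
    {x : EuclideanSpace ℝ (Fin n)}
    (hx : ContDiffAt ℝ 3 u x)
    (hev3 : ∀ᶠ y in nhds x, ContDiffAt ℝ 3 u y)
    (heqev : (fun y => H (gradient u y)) =ᶠ[nhds x] fun y => ε * lap u y)
    (j : Fin n) :
    ∑ k, (gradient H (gradient u x)) k * fderiv ℝ (fderiv ℝ u) x (ee n j) (ee n k)
      = ε * ∑ k, fderiv ℝ (fderiv ℝ (fderiv ℝ u)) x (ee n j) (ee n k) (ee n k) := by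
  have d2 : DifferentiableAt ℝ (fderiv ℝ u) x :=
    (hx.fderiv_right (m := 2) (by norm_num)).differentiableAt (by norm_num)
  have d3 : DifferentiableAt ℝ (fderiv ℝ (fderiv ℝ u)) x :=
    ((hx.fderiv_right (m := 2) (by norm_num)).fderiv_right (m := 1) (by norm_num)).differentiableAt (by norm_num)
  have hgrad : gradient u = (Tmap n ∘ fderiv ℝ u) := by
    funext y
    ext k
    show gradient u y k = fderiv ℝ u y (ee n k)
    exact grad_apply u y k
  have hgd : DifferentiableAt ℝ (gradient u) x := by
    rw [hgrad]
    exact ((Tmap n).differentiableAt).comp x d2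
  have hHd : DifferentiableAt ℝ H (gradient u x) := hH.differentiable (by norm_num) |>.differentiableAt
  have hLHS : fderiv ℝ (fun y => H (gradient u y)) x (ee n j)
      = ∑ k, (gradient H (gradient u x)) k * fderiv ℝ (fderiv ℝ u) x (ee n j) (ee n k) := by
    have hcomp : fderiv ℝ (fun y => H (gradient u y)) x
        = (fderiv ℝ H (gradient u x)).comp (fderiv ℝ (gradient u) x) :=
      fderiv_comp x hHd hgd
    have hgradf : fderiv ℝ (gradient u) x = (Tmap n).comp (fderiv ℝ (fderiv ℝ u) x) := by
      rw [hgrad, fderiv_comp x ((Tmap n).differentiableAt) d2, ContinuousLinearMap.fderiv]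
    rw [hcomp]
    simp only [ContinuousLinearMap.comp_apply, hgradf]
    set p := gradient u x
    set M := fderiv ℝ (fderiv ℝ u) x (ee n j) with hM
    have h1 : fderiv ℝ H p (Tmap n M) = ⟪gradient H p, Tmap n M⟫ := by
      rw [gradient, InnerProductSpace.toDual_symm_apply]
    rw [h1, inner_eq_sum]
    exact Finset.sum_congr rfl fun k _ => by rw [Tmap_apply]
  have hRHS : fderiv ℝ (fun y => ε * lap u y) x (ee n j)
      = ε * ∑ k, fderiv ℝ (fderiv ℝ (fderiv ℝ u)) x (ee n j) (ee n k) (ee n k) := by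
    have hlapev : (fun y => lap u y) =ᶠ[nhds x]
        (fun y => ∑ k, fderiv ℝ (fderiv ℝ u) y (ee n k) (ee n k)) := by
      filter_upwards [hev3] with y hy
      have d2y : DifferentiableAt ℝ (fderiv ℝ u) y :=
        (hy.fderiv_right (m := 2) (by norm_num)).differentiableAt (by norm_num)
      simp only [lap]
      exact Finset.sum_congr rfl fun k _ => pd2_eq u y d2y k k
    have hevmul : (fun y => ε * lap u y) =ᶠ[nhds x]
        (fun y => ε * ∑ k, fderiv ℝ (fderiv ℝ u) y (ee n k) (ee n k)) := by
      filter_upwards [hlapev] with y hy; rw [hy]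
    rw [hevmul.fderiv_eq]
    have hdk : ∀ k : Fin n, DifferentiableAt ℝ (fun y => fderiv ℝ (fderiv ℝ u) y (ee n k) (ee n k)) x :=
      fun k => (d3.clm_apply (differentiableAt_const _)).clm_apply (differentiableAt_const _)
    have hdsum : DifferentiableAt ℝ (fun y => ∑ k, fderiv ℝ (fderiv ℝ u) y (ee n k) (ee n k)) x :=
      DifferentiableAt.fun_sum fun k _ => hdk k
    rw [fderiv_const_mul hdsum, ContinuousLinearMap.smul_apply,
      fderiv_fun_sum (fun k _ => hdk k), ContinuousLinearMap.sum_apply]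
    simp only [smul_eq_mul]
    congr 1
    exact Finset.sum_congr rfl fun k _ => pd3_eq u x d3 k k j
  rw [← hLHS, ← hRHS, heqev.fderiv_eq]

/-- Symmetry of the second derivative. -/
lemma symm2 {n : ℕ} {u : EuclideanSpace ℝ (Fin n) → ℝ} {x : EuclideanSpace ℝ (Fin n)}
    (hx : ContDiffAt ℝ 3 u x) (v w : EuclideanSpace ℝ (Fin n)) :
    fderiv ℝ (fderiv ℝ u) x v w = fderiv ℝ (fderiv ℝ u) x w v :=
  (hx.isSymmSndFDerivAt (by norm_num)) v w

/-- Symmetry of the third derivative in the first two slots. -/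
lemma symm3a {n : ℕ} {u : EuclideanSpace ℝ (Fin n) → ℝ} {x : EuclideanSpace ℝ (Fin n)}
    (hx : ContDiffAt ℝ 3 u x) (a b c : Fin n) :
    fderiv ℝ (fderiv ℝ (fderiv ℝ u)) x (ee n a) (ee n b) (ee n c)
      = fderiv ℝ (fderiv ℝ (fderiv ℝ u)) x (ee n b) (ee n a) (ee n c) := by
  have h : IsSymmSndFDerivAt ℝ (fderiv ℝ u) x :=
    (hx.fderiv_right (m := 2) (by norm_num)).isSymmSndFDerivAt (by norm_num)
  rw [h (ee n a) (ee n b)]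

/-- Symmetry of the third derivative in the last two slots. -/
lemma symm3b {n : ℕ} {u : EuclideanSpace ℝ (Fin n) → ℝ} {x : EuclideanSpace ℝ (Fin n)}
    (hx : ContDiffAt ℝ 3 u x) (hev3 : ∀ᶠ y in nhds x, ContDiffAt ℝ 3 u y) (a b c : Fin n) :
    fderiv ℝ (fderiv ℝ (fderiv ℝ u)) x (ee n a) (ee n b) (ee n c)
      = fderiv ℝ (fderiv ℝ (fderiv ℝ u)) x (ee n a) (ee n c) (ee n b) := by
  have d3 : DifferentiableAt ℝ (fderiv ℝ (fderiv ℝ u)) x :=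
    ((hx.fderiv_right (m := 2) (by norm_num)).fderiv_right (m := 1) (by norm_num)).differentiableAt (by norm_num)
  have hev : (fun y => fderiv ℝ (fderiv ℝ u) y (ee n b) (ee n c)) =ᶠ[nhds x]
      (fun y => fderiv ℝ (fderiv ℝ u) y (ee n c) (ee n b)) := by
    filter_upwards [hev3] with y hy
    exact symm2 hy _ _
  rw [← pd3_eq u x d3 b c a, hev.fderiv_eq, pd3_eq u x d3 c b a]

theorem stmt10 (n : ℕ) (hn : 1 ≤ n) (ε : ℝ) (hε : 0 < ε)
    (U : Set (EuclideanSpace ℝ (Fin n))) (hUopen : IsOpen U)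
    (H : EuclideanSpace ℝ (Fin n) → ℝ) (hH : ContDiff ℝ 1 H)
    (γ δ : ℝ) (hγ : 0 < γ) (hδ : 0 < δ)
    (hH3 : ∀ p, ⟪gradient H p, p⟫ - γ * H p ≥ δ)
    (u : EuclideanSpace ℝ (Fin n) → ℝ) (hu : ContDiffOn ℝ 3 u U)
    (heq : ∀ x ∈ U, H (gradient u x) = ε * lap u x)
    (α β : ℝ) (hαβ : 0 < α + β) (hγαβ : 2 * α + β = γ * (α + β))
    (z : EuclideanSpace ℝ (Fin n) → ℝ)
    (hz : ∀ x, z x = α * ⟪x, gradient u x⟫ + β * u x) :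
    ∀ x ∈ U,
      ⟪gradient H (gradient u x), gradient z x⟫ - ε * lap z x ≥ (α + β) * δ
      ∧ 0 < (α + β) * δ := by
  intro x hxU
  refine ⟨?_, mul_pos hαβ hδ⟩
  have hx3 : ContDiffAt ℝ 3 u x := hu.contDiffAt (hUopen.mem_nhds hxU)
  have hev3 : ∀ᶠ y in nhds x, ContDiffAt ℝ 3 u y := by
    filter_upwards [hUopen.mem_nhds hxU] with y hy
    exact hu.contDiffAt (hUopen.mem_nhds hy)
  have d2 : DifferentiableAt ℝ (fderiv ℝ u) x :=
    (hx3.fderiv_right (m := 2) (by norm_num)).differentiableAt (by norm_num)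
  set p : Fin n → ℝ := fun k => fderiv ℝ u x (ee n k) with hp
  set F2 : Fin n → Fin n → ℝ := fun i k => fderiv ℝ (fderiv ℝ u) x (ee n i) (ee n k) with hF2
  set F3 : Fin n → Fin n → Fin n → ℝ :=
    fun i k l => fderiv ℝ (fderiv ℝ (fderiv ℝ u)) x (ee n i) (ee n k) (ee n l) with hF3
  set gH : Fin n → ℝ := fun k => gradient H (gradient u x) k with hgH
  -- gradient z
  have hgz : ∀ k, gradient z x k = (α + β) * p k + α * ∑ j, x j * F2 k j := by
    intro k
    rw [grad_apply, fderiv_z u z α β hz hx3 k]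
  have hinnerz : ⟪gradient H (gradient u x), gradient z x⟫
      = ∑ k, gH k * ((α + β) * p k + α * ∑ j, x j * F2 k j) := by
    rw [inner_eq_sum]
    exact Finset.sum_congr rfl fun k _ => by rw [hgz k]
  -- laplacian of z
  have hlapz : lap z x = ∑ k, ((2 * α + β) * F2 k k + α * ∑ j, x j * F3 k k j) := by
    rw [lap]
    refine Finset.sum_congr rfl fun k _ => ?_
    refine pd2_z u z α β hx3 k ?_
    filter_upwards [hev3] with y hy
    exact fderiv_z u z α β hz hy k
  -- PDE at x
  have hpdex : H (gradient u x) = ε * ∑ k, F2 k k := by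
    rw [heq x hxU, lap]
    congr 1
    exact Finset.sum_congr rfl fun k _ => pd2_eq u x d2 k k
  -- differentiated PDE
  have heqev : (fun y => H (gradient u y)) =ᶠ[nhds x] fun y => ε * lap u y := by
    filter_upwards [hUopen.mem_nhds hxU] with y hy
    exact heq y hy
  have hpde : ∀ j, ∑ k, gH k * F2 j k = ε * ∑ k, F3 j k k :=
    fun j => pde_diff u H ε hH hx3 hev3 heqev j
  -- symmetries
  have hs2 : ∀ i k, F2 i k = F2 k i := fun i k => symm2 hx3 _ _
  have hs3 : ∀ j k, F3 j k k = F3 k k j := by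
    intro j k
    show fderiv ℝ (fderiv ℝ (fderiv ℝ u)) x (ee n j) (ee n k) (ee n k)
        = fderiv ℝ (fderiv ℝ (fderiv ℝ u)) x (ee n k) (ee n k) (ee n j)
    exact (symm3a hx3 j k k).trans (symm3b hx3 hev3 k j k)
  -- the middle cancellation
  have hmid : ∑ k, gH k * (α * ∑ j, x j * F2 k j) = ε * α * ∑ k, ∑ j, x j * F3 k k j := by
    calc ∑ k, gH k * (α * ∑ j, x j * F2 k j)
        = ∑ k, ∑ j, α * (x j * (gH k * F2 j k)) := by
          refine Finset.sum_congr rfl fun k _ => ?_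
          rw [Finset.mul_sum, Finset.mul_sum]
          refine Finset.sum_congr rfl fun j _ => ?_
          rw [hs2 k j]
          ring
      _ = ∑ j, ∑ k, α * (x j * (gH k * F2 j k)) := Finset.sum_comm
      _ = ∑ j, α * (x j * ∑ k, gH k * F2 j k) := by
          refine Finset.sum_congr rfl fun j _ => ?_
          rw [Finset.mul_sum, Finset.mul_sum]
      _ = ∑ j, α * (x j * (ε * ∑ k, F3 k k j)) := by
          refine Finset.sum_congr rfl fun j _ => ?_
          rw [hpde j, Finset.sum_congr rfl fun k _ => hs3 j k]
      _ = ∑ j, ε * α * (x j * ∑ k, F3 k k j) := by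
          refine Finset.sum_congr rfl fun j _ => ?_
          ring
      _ = ∑ j, ∑ k, ε * α * (x j * F3 k k j) := by
          refine Finset.sum_congr rfl fun j _ => ?_
          rw [Finset.mul_sum, Finset.mul_sum]
      _ = ∑ k, ∑ j, ε * α * (x j * F3 k k j) := Finset.sum_comm
      _ = ε * α * ∑ k, ∑ j, x j * F3 k k j := by
          rw [Finset.mul_sum]
          refine Finset.sum_congr rfl fun k _ => ?_
          rw [Finset.mul_sum]
  -- expand and conclude
  have hexp1 : ∑ k, gH k * ((α + β) * p k + α * ∑ j, x j * F2 k j)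
      = (α + β) * (∑ k, gH k * p k) + ∑ k, gH k * (α * ∑ j, x j * F2 k j) := by
    rw [Finset.sum_congr rfl
      (fun k _ => show gH k * ((α + β) * p k + α * ∑ j, x j * F2 k j)
        = (α + β) * (gH k * p k) + gH k * (α * ∑ j, x j * F2 k j) by ring),
      Finset.sum_add_distrib, Finset.mul_sum]
  have hexp2 : ∑ k, ((2 * α + β) * F2 k k + α * ∑ j, x j * F3 k k j)
      = (2 * α + β) * (∑ k, F2 k k) + α * ∑ k, ∑ j, x j * F3 k k j := by
    rw [Finset.sum_add_distrib, Finset.mul_sum, Finset.mul_sum]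
  have hstep : ⟪gradient H (gradient u x), gradient z x⟫ - ε * lap z x
      = (α + β) * ((∑ k, gH k * p k) - γ * H (gradient u x)) := by
    rw [hinnerz, hlapz, hexp1, hexp2, hmid, hpdex, hγαβ]
    ring
  rw [hstep]
  have hP : ⟪gradient H (gradient u x), gradient u x⟫ = ∑ k, gH k * p k := by
    rw [inner_eq_sum]
    refine Finset.sum_congr rfl fun k _ => ?_
    rw [grad_apply u x k]
  have h3 := hH3 (gradient u x)
  rw [hP] at h3
  calc (α + β) * ((∑ k, gH k * p k) - γ * H (gradient u x))
      ≥ (α + β) * δ := by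
        apply mul_le_mul_of_nonneg_left h3 hαβ.le
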